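/- Let p be a prime and let σ ∈ F_p[[t]] with σ ≡ t (mod t²) be a power series of finite compositional order that, viewed as an element of the Laurent series field F_p((t)), is algebraic over the rational function field F_p(t). Let F_p(σ), F_p(t) and F_p(t, σ) denote the subfields of F_p((t)) generated over F_p by σ, by t, and by t and σ, respectively. Then [F_p(t, σ) : F_p(t)] = [F_p(t, σ) : F_p(σ)] (the degree of σ over F_p(t) equals the height, i.e., the degree of t over F_p(σ)). -/

import Mathlib

open PowerSeries

set_option synthInstance.maxHeartbeats 1000000
set_option maxHeartbeats 1000000

/-- Composition of power series `σ ∘ τ` (substitution of `τ` into `σ`), valid when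
`τ` has zero constant coefficient. -/
noncomputable def ngComp {R : Type*} [CommRing R] (σ τ : PowerSeries R) : PowerSeries R :=
  PowerSeries.mk fun k =>
    ∑ n ∈ Finset.range (k + 1), PowerSeries.coeff n σ * PowerSeries.coeff k (τ ^ n)

/-- `ngIter σ n = σ^{∘n}`, the `n`-fold compositional iterate. -/
noncomputable def ngIter {R : Type*} [CommRing R] (σ : PowerSeries R) : ℕ → PowerSeries R
  | 0 => PowerSeries.X
  | n + 1 => ngComp σ (ngIter σ n)

/-- The element `t` of the Laurent series field `F_p((t))`. -/
noncomputable def tL (p : ℕ) [Fact p.Prime] : LaurentSeries (ZMod p) :=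
  ((PowerSeries.X : PowerSeries (ZMod p)) : LaurentSeries (ZMod p))

/-- A power series viewed as an element of the Laurent series field `F_p((t))`. -/
noncomputable def sL (p : ℕ) [Fact p.Prime] (σ : PowerSeries (ZMod p)) :
    LaurentSeries (ZMod p) :=
  (σ : LaurentSeries (ZMod p))

namespace NgProof

variable {R : Type*} [CommRing R]

theorem coeff_ngComp (f τ : PowerSeries R) (k : ℕ) :
    coeff k (ngComp f τ) = ∑ n ∈ Finset.range (k + 1), coeff n f * coeff k (τ ^ n) := by
  simp [ngComp, coeff_mk]

theorem coeff_pow_eq_zero {τ : PowerSeries R} (h : constantCoeff τ = 0)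
    {k n : ℕ} (hkn : k < n) : coeff k (τ ^ n) = 0 := by
  have hX : (X : R⟦X⟧) ∣ τ := X_dvd_iff.mpr h
  have hd : (X : R⟦X⟧) ^ n ∣ τ ^ n := pow_dvd_pow_of_dvd hX n
  exact (X_pow_dvd_iff.mp hd) k hkn

theorem coeff_ngComp_eval {τ : PowerSeries R} (h : constantCoeff τ = 0) (f : PowerSeries R)
    {k N : ℕ} (hk : k < N) :
    coeff k (ngComp f τ) = coeff k (Polynomial.eval₂ (C (R := R)) τ (trunc N f)) := by
  have hdeg : (trunc N f).natDegree < N := by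
    rcases eq_or_ne (trunc N f) 0 with h0 | h0
    · simpa [h0] using Nat.lt_of_le_of_lt (Nat.zero_le k) hk
    · exact (Polynomial.natDegree_lt_iff_degree_lt h0).mpr (degree_trunc_lt f N)
  rw [Polynomial.eval₂_eq_sum_range' (C (R := R)) hdeg τ, map_sum, coeff_ngComp]
  have hterm : ∀ n ∈ Finset.range N, (coeff k) ((C (R := R)) ((trunc N f).coeff n) * τ ^ n)
      = coeff n f * coeff k (τ ^ n) := by
    intro n hn
    rw [coeff_trunc, if_pos (Finset.mem_range.mp hn), coeff_C_mul]
  rw [Finset.sum_congr rfl hterm]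
  refine Finset.sum_subset (Finset.range_subset_range.mpr hk) fun n _ hn => ?_
  have hkn : k < n := by
    simp only [Finset.mem_range] at hn; omega
  rw [coeff_pow_eq_zero h hkn, mul_zero]

theorem ngComp_add (f g τ : PowerSeries R) : ngComp (f + g) τ = ngComp f τ + ngComp g τ := by
  ext k
  simp [coeff_ngComp, add_mul, Finset.sum_add_distrib]

theorem ngComp_zero (τ : PowerSeries R) : ngComp (0 : R⟦X⟧) τ = 0 := by
  ext k; simp [coeff_ngComp]

theorem ngComp_one (τ : PowerSeries R) : ngComp (1 : R⟦X⟧) τ = 1 := by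
  ext k
  rw [coeff_ngComp, Finset.sum_eq_single 0]
  · simp
  · intro n _ hne
    rw [coeff_one, if_neg hne, zero_mul]
  · intro habs
    exact absurd (Finset.mem_range.mpr (Nat.succ_pos k)) habs

theorem ngComp_mul {τ : PowerSeries R} (h : constantCoeff τ = 0) (f g : PowerSeries R) :
    ngComp (f * g) τ = ngComp f τ * ngComp g τ := by
  ext k
  have hk : k < k + 1 := Nat.lt_succ_self k
  have zero_eval : ∀ P : Polynomial R, (∀ i, i < k + 1 → P.coeff i = 0) →
      coeff k (Polynomial.eval₂ (C (R := R)) τ P) = 0 := by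
    intro P hP
    rw [Polynomial.eval₂_eq_sum_range, map_sum]
    refine Finset.sum_eq_zero fun i _ => ?_
    rw [coeff_C_mul]
    rcases lt_or_ge i (k + 1) with hi | hi
    · rw [hP i hi, zero_mul]
    · rw [coeff_pow_eq_zero h (Nat.lt_of_lt_of_le hk hi), mul_zero]
  have htr : ∀ i, i < k + 1 →
      (trunc (k+1) f * trunc (k+1) g - trunc (k+1) (f * g)).coeff i = 0 := by
    intro i hi
    rw [Polynomial.coeff_sub, Polynomial.coeff_mul, coeff_trunc, if_pos hi,
      PowerSeries.coeff_mul, sub_eq_zero]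
    refine Finset.sum_congr rfl fun ab hab => ?_
    have hab' := Finset.HasAntidiagonal.mem_antidiagonal.mp hab
    rw [coeff_trunc, coeff_trunc, if_pos (by omega), if_pos (by omega)]
  have e0 : coeff k (Polynomial.eval₂ (C (R := R)) τ (trunc (k+1) (f * g))) =
      coeff k (Polynomial.eval₂ (C (R := R)) τ (trunc (k+1) f * trunc (k+1) g)) := by
    have hsplit : trunc (k+1) f * trunc (k+1) g =
        trunc (k+1) (f * g) + (trunc (k+1) f * trunc (k+1) g - trunc (k+1) (f * g)) := by ring
    rw [hsplit, Polynomial.eval₂_add, map_add, zero_eval _ htr, add_zero]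
  rw [coeff_ngComp_eval h (f * g) hk, e0, Polynomial.eval₂_mul, PowerSeries.coeff_mul,
    PowerSeries.coeff_mul]
  refine Finset.sum_congr rfl fun ab hab => ?_
  have hab' := Finset.HasAntidiagonal.mem_antidiagonal.mp hab
  rw [← coeff_ngComp_eval h f (show ab.1 < k + 1 by omega),
    ← coeff_ngComp_eval h g (show ab.2 < k + 1 by omega)]

/-- Composition with `τ` as a ring homomorphism. -/
noncomputable def ngCompHom {τ : PowerSeries R} (h : constantCoeff τ = 0) :
    PowerSeries R →+* PowerSeries R where
  toFun f := ngComp f τ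
  map_one' := ngComp_one τ
  map_mul' := ngComp_mul h
  map_zero' := ngComp_zero τ
  map_add' f g := ngComp_add f g τ

@[simp] theorem ngCompHom_apply {τ : PowerSeries R} (h : constantCoeff τ = 0)
    (f : PowerSeries R) : ngCompHom h f = ngComp f τ := rfl

theorem ngComp_pow {τ : PowerSeries R} (h : constantCoeff τ = 0) (g : PowerSeries R) (n : ℕ) :
    ngComp (g ^ n) τ = (ngComp g τ) ^ n := map_pow (ngCompHom h) g n

theorem ngComp_X_left {τ : PowerSeries R} (h : constantCoeff τ = 0) :
    ngComp (X : R⟦X⟧) τ = τ := by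
  ext k
  rw [coeff_ngComp, Finset.sum_eq_single 1]
  · simp
  · intro n _ hne
    rw [coeff_X, if_neg hne, zero_mul]
  · intro h1
    have hk0 : k = 0 := by
      simp only [Finset.mem_range] at h1; omega
    subst hk0
    simp [coeff_zero_eq_constantCoeff, h]

theorem ngComp_X_right (f : PowerSeries R) : ngComp f (X : R⟦X⟧) = f := by
  ext k
  rw [coeff_ngComp, Finset.sum_eq_single k]
  · simp
  · intro n _ hne
    rw [coeff_X_pow, if_neg (fun hh => hne hh.symm), mul_zero]
  · intro habs
    exact absurd (Finset.mem_range.mpr (Nat.lt_succ_self k)) habs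

theorem constantCoeff_ngComp (f τ : PowerSeries R) :
    constantCoeff (ngComp f τ) = constantCoeff f := by
  rw [← coeff_zero_eq_constantCoeff, coeff_ngComp]
  simp [coeff_zero_eq_constantCoeff]

theorem ngComp_assoc (f : PowerSeries R) {g h : PowerSeries R} (hg : constantCoeff g = 0)
    (hh : constantCoeff h = 0) :
    ngComp (ngComp f g) h = ngComp f (ngComp g h) := by
  ext k
  rw [coeff_ngComp, coeff_ngComp]
  calc
    ∑ m ∈ Finset.range (k + 1), coeff m (ngComp f g) * coeff k (h ^ m)
      = ∑ m ∈ Finset.range (k + 1), ∑ n ∈ Finset.range (k + 1),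
          coeff n f * coeff m (g ^ n) * coeff k (h ^ m) := by
        refine Finset.sum_congr rfl fun m hm => ?_
        rw [coeff_ngComp, Finset.sum_mul]
        refine Finset.sum_subset
          (Finset.range_subset_range.mpr (by simp only [Finset.mem_range] at hm; omega))
          fun n _ hn => ?_
        have hmn : m < n := by simp only [Finset.mem_range] at hn; omega
        rw [coeff_pow_eq_zero hg hmn, mul_zero, zero_mul]
    _ = ∑ n ∈ Finset.range (k + 1), coeff n f * coeff k ((ngComp g h) ^ n) := by
        rw [Finset.sum_comm]
        refine Finset.sum_congr rfl fun n _ => ?_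
        rw [← ngComp_pow hh g n, coeff_ngComp, Finset.mul_sum]
        exact Finset.sum_congr rfl fun m _ => by ring

theorem constantCoeff_ngIter {σ : PowerSeries R} (h : constantCoeff σ = 0) (k : ℕ) :
    constantCoeff (ngIter σ k) = 0 := by
  induction k with
  | zero => exact constantCoeff_X
  | succ k ih =>
    show constantCoeff (ngComp σ (ngIter σ k)) = 0
    rw [constantCoeff_ngComp, h]

theorem ngComp_iter_comm {σ : PowerSeries R} (h : constantCoeff σ = 0) (k : ℕ) :
    ngComp (ngIter σ k) σ = ngIter σ (k + 1) := by
  induction k with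
  | zero =>
    show ngComp X σ = ngComp σ (ngIter σ 0)
    rw [ngComp_X_left h]
    show σ = ngComp σ X
    rw [ngComp_X_right]
  | succ k ih =>
    show ngComp (ngComp σ (ngIter σ k)) σ = ngComp σ (ngIter σ (k + 1))
    rw [ngComp_assoc σ (constantCoeff_ngIter h k) h, ih]

end NgProof

namespace NgProof

theorem subfield_map_closure {K L : Type*} [Field K] [Field L] (f : K →+* L) (s : Set K) :
    (Subfield.closure s).map f = Subfield.closure (f '' s) := by
  apply le_antisymm
  · rw [Subfield.map_le_iff_le_comap, Subfield.closure_le]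
    intro x hx
    exact Subfield.subset_closure (Set.mem_image_of_mem f hx)
  · rw [Subfield.closure_le]
    rintro y ⟨x, hx, rfl⟩
    exact Subfield.mem_map.mpr ⟨x, Subfield.subset_closure hx, rfl⟩

theorem isAlgebraic_of_ringHom {R S K L : Type*} [Field R] [Field S] [Field K] [Field L]
    [Algebra R K] [Algebra S L] (f : R →+* S) (g : K →+* L)
    (hcomp : ∀ x : R, algebraMap S L (f x) = g (algebraMap R K x))
    {x : K} (h : IsAlgebraic R x) : IsAlgebraic S (g x) := by
  obtain ⟨P, hP, hPx⟩ := h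
  refine ⟨P.map f, Polynomial.map_ne_zero hP, ?_⟩
  rw [Polynomial.aeval_def, Polynomial.eval₂_map,
    show (algebraMap S L).comp f = g.comp (algebraMap R K) from RingHom.ext hcomp,
    ← Polynomial.hom_eval₂, ← Polynomial.aeval_def, hPx, map_zero]

end NgProof

open NgProof

/-- Abbreviation for the Laurent series field. -/
abbrev ngK (p : ℕ) [Fact p.Prime] : Type _ := LaurentSeries (ZMod p)


/-- For a power series `σ ≡ t (mod t²)` over `F_p` of finite compositional order that is
algebraic over `F_p(t)`, the degree `[F_p(t,σ) : F_p(t)]` equals the height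
`[F_p(t,σ) : F_p(σ)]`.  Here `F_p(t) = Subfield.closure {t}` since `F_p` is the prime field,
`F_p(t,σ) = F_p(t)(σ) = F_p(σ)(t)`, and degrees are taken as `Module.finrank`. -/
theorem statement11 (p : ℕ) [Fact p.Prime] (σ : PowerSeries (ZMod p))
    (h0 : PowerSeries.coeff 0 σ = 0) (h1 : PowerSeries.coeff 1 σ = 1)
    (hfin : ∃ n : ℕ, 0 < n ∧ ngIter σ n = PowerSeries.X)
    (halg : IsAlgebraic (Subfield.closure {tL p}) (sL p σ)) :
    Module.finrank (Subfield.closure {tL p})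
      (IntermediateField.adjoin (Subfield.closure {tL p})
        ({sL p σ} : Set (LaurentSeries (ZMod p)))) =
    Module.finrank (Subfield.closure {sL p σ})
      (IntermediateField.adjoin (Subfield.closure {sL p σ})
        ({tL p} : Set (LaurentSeries (ZMod p)))) := by
  classical
  obtain ⟨n, hn, hiter⟩ := hfin
  have h0' : constantCoeff σ = 0 := by rwa [← coeff_zero_eq_constantCoeff]
  -- the compositional inverse
  set τ : PowerSeries (ZMod p) := ngIter σ (n - 1) with hτdef
  have hτ0 : constantCoeff τ = 0 := constantCoeff_ngIter h0' _
  have hn1 : n - 1 + 1 = n := Nat.succ_pred_eq_of_pos hn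
  have hστ : ngComp σ τ = X := by
    have h := hiter
    rw [← hn1] at h
    exact h
  have hτσ : ngComp τ σ = X := by
    rw [hτdef, ngComp_iter_comm h0', hn1, hiter]
  have hcσ : ∀ f, ngComp (ngComp f σ) τ = f := fun f => by
    rw [ngComp_assoc f h0' hτ0, hστ, ngComp_X_right]
  have hcτ : ∀ f, ngComp (ngComp f τ) σ = f := fun f => by
    rw [ngComp_assoc f hτ0 h0', hτσ, ngComp_X_right]
  -- the substitution automorphism of the Laurent series field
  have hlσ : Function.LeftInverse (fun f => ngComp f τ) (ngCompHom h0') := hcσ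
  have hlτ : Function.LeftInverse (fun f => ngComp f σ) (ngCompHom hτ0) := hcτ
  let gσ : PowerSeries (ZMod p) →+* ngK p :=
    (algebraMap (PowerSeries (ZMod p)) (ngK p)).comp (ngCompHom h0')
  let gτ : PowerSeries (ZMod p) →+* ngK p :=
    (algebraMap (PowerSeries (ZMod p)) (ngK p)).comp (ngCompHom hτ0)
  have hgσ : Function.Injective gσ :=
    (IsFractionRing.injective (PowerSeries (ZMod p)) (ngK p)).comp hlσ.injective
  have hgτ : Function.Injective gτ :=
    (IsFractionRing.injective (PowerSeries (ZMod p)) (ngK p)).comp hlτ.injective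
  let Ψσ : ngK p →+* ngK p := IsFractionRing.lift hgσ
  let Ψτ : ngK p →+* ngK p := IsFractionRing.lift hgτ
  have hΨσ : ∀ f : PowerSeries (ZMod p),
      Ψσ (algebraMap (PowerSeries (ZMod p)) (ngK p) f) =
      algebraMap (PowerSeries (ZMod p)) (ngK p) (ngComp f σ) := fun f =>
    IsFractionRing.lift_algebraMap hgσ f
  have hΨτ : ∀ f : PowerSeries (ZMod p),
      Ψτ (algebraMap (PowerSeries (ZMod p)) (ngK p) f) =
      algebraMap (PowerSeries (ZMod p)) (ngK p) (ngComp f τ) := fun f =>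
    IsFractionRing.lift_algebraMap hgτ f
  have hcomp1 : Ψτ.comp Ψσ = RingHom.id (ngK p) := by
    apply IsLocalization.ringHom_ext (nonZeroDivisors (PowerSeries (ZMod p)))
    ext f
    simp only [RingHom.comp_apply, RingHom.id_apply, hΨσ, hΨτ, hcσ f]
  have hcomp2 : Ψσ.comp Ψτ = RingHom.id (ngK p) := by
    apply IsLocalization.ringHom_ext (nonZeroDivisors (PowerSeries (ZMod p)))
    ext f
    simp only [RingHom.comp_apply, RingHom.id_apply, hΨσ, hΨτ, hcτ f]
  let Φ : ngK p ≃+* ngK p := RingEquiv.ofRingHom Ψσ Ψτ hcomp2 hcomp1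
  have hΦ : ∀ f : PowerSeries (ZMod p), Φ (sL p f) = sL p (ngComp f σ) := fun f => hΨσ f
  -- basic elements
  set t : ngK p := tL p with htdef
  set s : ngK p := sL p σ with hsdef
  have hΦt : Φ t = s := by
    have h := hΦ X
    rwa [ngComp_X_left h0'] at h
  set sk : ℕ → ngK p := fun k => sL p (ngIter σ k) with hskdef
  have hsk0 : sk 0 = t := rfl
  have hsk1 : sk 1 = s := by
    show sL p (ngComp σ X) = s
    rw [ngComp_X_right]
  have hskn : sk n = t := by
    show sL p (ngIter σ n) = t
    rw [hiter]
    rfl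
  have hΦsk : ∀ k, Φ (sk k) = sk (k + 1) := fun k => by
    show Φ (sL p (ngIter σ k)) = sL p (ngIter σ (k + 1))
    rw [hΦ, ngComp_iter_comm h0']
  -- subfields
  set A : Subfield (ngK p) := Subfield.closure {t} with hAdef
  set B : Subfield (ngK p) := Subfield.closure {s} with hBdef
  set C : Subfield (ngK p) := Subfield.closure {t, s} with hCdef
  set S : Set (ngK p) := sk '' Set.Iic n with hSdef
  set M : Subfield (ngK p) := Subfield.closure S with hMdef
  have htA : t ∈ A := Subfield.subset_closure rfl
  have hsB : s ∈ B := Subfield.subset_closure rfl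
  have htS : t ∈ S := ⟨0, Nat.zero_le n, hsk0⟩
  have hsS : s ∈ S := ⟨1, hn, hsk1⟩
  have hAC : A ≤ C := Subfield.closure_le.mpr (fun x hx =>
    Subfield.subset_closure (by rw [Set.mem_singleton_iff] at hx; exact Or.inl hx))
  have hBC : B ≤ C := Subfield.closure_le.mpr (fun x hx =>
    Subfield.subset_closure (by rw [Set.mem_singleton_iff] at hx; exact Or.inr hx))
  have hCM : C ≤ M := Subfield.closure_le.mpr (by
    rintro x (rfl | rfl)
    · exact Subfield.subset_closure htS
    · exact Subfield.subset_closure hsS)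
  have hAM : A ≤ M := hAC.trans hCM
  have hBM : B ≤ M := hBC.trans hCM
  -- images under Φ
  have hAmap : A.map (Φ : ngK p →+* ngK p) = B := by
    rw [hAdef, subfield_map_closure, Set.image_singleton]
    have hc : (Φ : ngK p →+* ngK p) t = s := hΦt
    rw [hc]
  have hSmap : (Φ : ngK p →+* ngK p) '' S = S := by
    apply Set.Subset.antisymm
    · rintro y ⟨x, ⟨k, hk, rfl⟩, rfl⟩
      show Φ (sk k) ∈ S
      rw [hΦsk]
      rcases eq_or_lt_of_le (Set.mem_Iic.mp hk) with rfl | hk'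
      · have h : sk (k + 1) = sk 1 := by
          show sL p (ngComp σ (ngIter σ k)) = sL p (ngIter σ 1)
          rw [hiter]
          rfl
        rw [h]
        exact ⟨1, hn, rfl⟩
      · exact ⟨k + 1, hk', rfl⟩
    · rintro y ⟨k, hk, rfl⟩
      match k with
      | 0 =>
        refine ⟨sk (n - 1), ⟨n - 1, by simp only [Set.mem_Iic]; omega, rfl⟩, ?_⟩
        show Φ (sk (n - 1)) = sk 0
        rw [hΦsk, hn1, hskn, hsk0]
      | Nat.succ k =>
        exact ⟨sk k, ⟨k, by simp only [Set.mem_Iic] at hk ⊢; omega, rfl⟩, hΦsk k⟩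
  have hMmap : M.map (Φ : ngK p →+* ngK p) = M := by
    rw [hMdef, subfield_map_closure, hSmap]
  -- identification of adjoins with extendScalars
  have hCuA : Subfield.closure ((A : Set (ngK p)) ∪ {s}) = C := by
    apply le_antisymm
    · rw [Subfield.closure_le]
      rintro x (hx | hx)
      · exact hAC hx
      · rw [Set.mem_singleton_iff] at hx
        subst hx
        exact Subfield.subset_closure (Or.inr rfl)
    · rw [Subfield.closure_le]
      rintro x (rfl | rfl)
      · exact Subfield.subset_closure (Or.inl htA)
      · exact Subfield.subset_closure (Or.inr rfl)
  have hCuB : Subfield.closure ((B : Set (ngK p)) ∪ {t}) = C := by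
    apply le_antisymm
    · rw [Subfield.closure_le]
      rintro x (hx | hx)
      · exact hBC hx
      · rw [Set.mem_singleton_iff] at hx
        subst hx
        exact Subfield.subset_closure (Or.inl rfl)
    · rw [Subfield.closure_le]
      rintro x (rfl | rfl)
      · exact Subfield.subset_closure (Or.inr rfl)
      · exact Subfield.subset_closure (Or.inl hsB)
  have hMuA : Subfield.closure ((A : Set (ngK p)) ∪ S) = M := by
    apply le_antisymm
    · rw [Subfield.closure_le]
      rintro x (hx | hx)
      · exact hAM hx
      · exact Subfield.subset_closure hx
    · rw [Subfield.closure_le]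
      intro x hx
      exact Subfield.subset_closure (Or.inr hx)
  have hrangeA : Set.range (algebraMap A (ngK p)) = (A : Set (ngK p)) := Subtype.range_coe
  have hrangeB : Set.range (algebraMap B (ngK p)) = (B : Set (ngK p)) := Subtype.range_coe
  have hLAeq : IntermediateField.adjoin A ({s} : Set (ngK p)) = Subfield.extendScalars hAC := by
    apply SetLike.coe_injective
    show ((IntermediateField.adjoin A ({s} : Set (ngK p))).toSubfield : Set (ngK p)) = _
    rw [IntermediateField.adjoin_toSubfield, hrangeA, hCuA, Subfield.coe_extendScalars]
  have hLBeq : IntermediateField.adjoin B ({t} : Set (ngK p)) = Subfield.extendScalars hBC := by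
    apply SetLike.coe_injective
    show ((IntermediateField.adjoin B ({t} : Set (ngK p))).toSubfield : Set (ngK p)) = _
    rw [IntermediateField.adjoin_toSubfield, hrangeB, hCuB, Subfield.coe_extendScalars]
  have hMAeq : IntermediateField.adjoin A S = Subfield.extendScalars hAM := by
    apply SetLike.coe_injective
    show ((IntermediateField.adjoin A S).toSubfield : Set (ngK p)) = _
    rw [IntermediateField.adjoin_toSubfield, hrangeA, hMuA, Subfield.coe_extendScalars]
  -- algebraicity of the orbit over A
  have halg' : IsAlgebraic A s := halg
  haveI hfdLA : FiniteDimensional A (Subfield.extendScalars hAC) := by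
    rw [← hLAeq]
    exact IntermediateField.adjoin.finiteDimensional halg'.isIntegral
  haveI : Algebra.IsIntegral A (Subfield.extendScalars hAC) := Algebra.IsIntegral.of_finite _ _
  let fAB : A →+* B :=
    { toFun := fun a => ⟨Φ a, by
        rw [← hAmap]; exact Subfield.mem_map.mpr ⟨a, a.2, rfl⟩⟩
      map_one' := by ext; simp
      map_mul' := fun a b => by ext; simp
      map_zero' := by ext; simp
      map_add' := fun a b => by ext; simp }
  let fBC : B →+* (Subfield.extendScalars hAC) :=
    { toFun := fun b => ⟨(b : ngK p), hBC b.2⟩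
      map_one' := rfl
      map_mul' := fun a b => rfl
      map_zero' := rfl
      map_add' := fun a b => rfl }
  have halgk : ∀ k, IsAlgebraic A (sk k) := by
    intro k
    induction k with
    | zero =>
      rw [hsk0]
      exact isAlgebraic_algebraMap (⟨t, htA⟩ : A)
    | succ k ih =>
      have hB : IsAlgebraic B (Φ (sk k)) :=
        isAlgebraic_of_ringHom fAB (Φ : ngK p →+* ngK p) (fun x => rfl) ih
      rw [hΦsk] at hB
      have hES : IsAlgebraic (Subfield.extendScalars hAC) ((RingHom.id (ngK p)) (sk (k + 1))) :=
        isAlgebraic_of_ringHom fBC (RingHom.id (ngK p)) (fun x => rfl) hB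
      rw [RingHom.id_apply] at hES
      exact (isIntegral_trans _ hES.isIntegral).isAlgebraic
  -- finite dimensionality of M over A
  haveI : Finite S := Set.Finite.to_subtype ((Set.finite_Iic n).image sk)
  haveI hfdMA : FiniteDimensional A (Subfield.extendScalars hAM) := by
    rw [← hMAeq]
    refine IntermediateField.finiteDimensional_adjoin fun x hx => ?_
    obtain ⟨k, -, rfl⟩ := hx
    exact (halgk k).isIntegral
  -- relative ranks
  have hposAM : 0 < Subfield.relfinrank A M := by
    rw [Subfield.relfinrank_eq_finrank_of_le hAM]
    exact Module.finrank_pos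
  have htower1 : Subfield.relfinrank A C * Subfield.relfinrank C M = Subfield.relfinrank A M :=
    Subfield.relfinrank_mul_relfinrank hAC hCM
  have htower2 : Subfield.relfinrank B C * Subfield.relfinrank C M = Subfield.relfinrank B M :=
    Subfield.relfinrank_mul_relfinrank hBC hCM
  have hposCM : 0 < Subfield.relfinrank C M := by
    rcases Nat.eq_zero_or_pos (Subfield.relfinrank C M) with hz | hp
    · rw [hz, mul_zero] at htower1
      omega
    · exact hp
  have hAMeqBM : Subfield.relfinrank A M = Subfield.relfinrank B M := by
    have hmm := Subfield.relfinrank_map_map A M (Φ : ngK p →+* ngK p)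
    rw [hAmap, hMmap] at hmm
    exact hmm.symm
  have key : Subfield.relfinrank A C = Subfield.relfinrank B C := by
    apply Nat.eq_of_mul_eq_mul_right hposCM
    rw [htower1, htower2, hAMeqBM]
  rw [hLAeq, hLBeq, ← Subfield.relfinrank_eq_finrank_of_le hAC,
    ← Subfield.relfinrank_eq_finrank_of_le hBC]
  exact key
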